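/- For q ≠ 0 and real parameters A ≠ 0, B, C, the functions φ₁(x) = -(A·x^q + B/2 + √Δ/2) and φ₂(x) = -(A·x^q + B/2 - √Δ/2), where Δ = B² - 4C ≥ 0, satisfy φ₁(x)·φ₂(x)·x = A·x^{q+1}·(A·x^q + B) + C·x and φ₂(x) + d(φ₁(x)·x)/dx = -((q+2)·A·x^q + B) for all x > 0, with φ₂ - φ₁ constant. -/
import Mathlib


/-- The factoring functions φ₁(x) = -(Ax^q + B/2 + √Δ/2), φ₂(x) = -(Ax^q + B/2 - √Δ/2),
Δ = B² - 4C ≥ 0, satisfy φ₁φ₂x = Ax^{q+1}(Ax^q + B) + Cx and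
φ₂ + d(φ₁x)/dx = -((q+2)Ax^q + B) for x > 0, with φ₂ - φ₁ constant. -/
theorem stmt17 (q A B C : ℝ) (hq : q ≠ 0) (hA : A ≠ 0) (hΔ : 0 ≤ B^2 - 4*C) :
    (∀ x : ℝ, 0 < x →
      (-(A * x ^ q + B / 2 + Real.sqrt (B^2 - 4*C) / 2))
        * (-(A * x ^ q + B / 2 - Real.sqrt (B^2 - 4*C) / 2)) * x
      = A * x ^ (q + 1) * (A * x ^ q + B) + C * x) ∧
    (∀ x : ℝ, 0 < x →
      (-(A * x ^ q + B / 2 - Real.sqrt (B^2 - 4*C) / 2))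
        + deriv (fun s : ℝ =>
            (-(A * s ^ q + B / 2 + Real.sqrt (B^2 - 4*C) / 2)) * s) x
      = -((q + 2) * A * x ^ q + B)) ∧
    (∃ K : ℝ, ∀ x : ℝ, 0 < x →
      (-(A * x ^ q + B / 2 - Real.sqrt (B^2 - 4*C) / 2))
        - (-(A * x ^ q + B / 2 + Real.sqrt (B^2 - 4*C) / 2)) = K) := by
  refine ⟨fun x hx => ?_, fun x hx => ?_, ⟨Real.sqrt (B^2 - 4*C), fun x hx => by ring⟩⟩
  · have hs : Real.sqrt (B^2 - 4*C) ^ 2 = B^2 - 4*C := Real.sq_sqrt hΔ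
    have h1 : x ^ (q + 1) = x ^ q * x := by
      rw [Real.rpow_add hx, Real.rpow_one]
    rw [h1]
    nlinarith [hs]
  · have hd : HasDerivAt (fun s : ℝ =>
        (-(A * s ^ q + B / 2 + Real.sqrt (B^2 - 4*C) / 2)) * s)
        ((-(A * (q * x ^ (q - 1)))) * x +
          (-(A * x ^ q + B / 2 + Real.sqrt (B^2 - 4*C) / 2)) * 1) x := by
      have h1 : HasDerivAt (fun s : ℝ => s ^ q) (q * x ^ (q - 1)) x :=
        Real.hasDerivAt_rpow_const (Or.inl hx.ne')
      have h2 : HasDerivAt (fun s : ℝ =>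
          -(A * s ^ q + B / 2 + Real.sqrt (B^2 - 4*C) / 2))
          (-(A * (q * x ^ (q - 1)))) x := (((h1.const_mul A).add_const _).add_const _).neg
      exact h2.mul (hasDerivAt_id x)
    rw [hd.deriv]
    have h1 : x ^ (q - 1) * x = x ^ q := by
      nth_rewrite 2 [← Real.rpow_one x]
      rw [← Real.rpow_add hx]; ring_nf
    linear_combination (-(A*q)) * h1
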